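/- Fix t ≥ 1 and w with ⌈(t+1)/2⌉ ≤ w ≤ t. Let q_0, …, q_t be nonnegative rational numbers with q_0 + … + q_t = 1 such that for every k with w ≤ k ≤ t one has ∑_{l=0}^{t} s_{k,l}·q_l < C(t,k)/2, where s_{k,l} is the number of k-proposals supported by an l-voter. Then there exist n ≥ 1 and a voter matrix V : Fin n → Fin t → Bool such that for each l the number of voters whose row has exactly l true entries equals q_l·n, and no proposal with at least w entries true is supported by a majority of voters. -/

import Mathlib

open Finset

/-- Number of topics on which opinion vector `v` agrees with proposal `p`. -/
def agreeCount {t : ℕ} (v p : Fin t → Bool) : ℕ :=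
  (univ.filter (fun j => v j = p j)).card

/-- Voter `v` supports proposal `p`: agreement on at least half the topics,
    i.e. `2 * |{j : v j = p j}| ≥ t`. -/
def Supports {t : ℕ} (v p : Fin t → Bool) : Prop :=
  t ≤ 2 * agreeCount v p

instance {t : ℕ} (v p : Fin t → Bool) : Decidable (Supports v p) :=
  Nat.decLe _ _

/-- Proposal `p` is supported by a majority of the voters of `V`:
    `2 * |{i : voter i supports p}| ≥ n`. -/
def MajSupported {n t : ℕ} (V : Fin n → Fin t → Bool) (p : Fin t → Bool) : Prop :=
  n ≤ 2 * (univ.filter (fun i => Supports (V i) p)).card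

/-- Column `j` of `V` has majority Y: `2 * |{i : V i j = true}| ≥ n`. -/
def ColMajority {n t : ℕ} (V : Fin n → Fin t → Bool) (j : Fin t) : Prop :=
  n ≤ 2 * (univ.filter (fun i => V i j = true)).card

/-- Number of true entries of a vector. -/
def trueCount {t : ℕ} (p : Fin t → Bool) : ℕ :=
  (univ.filter (fun j => p j = true)).card

/-- Number of matching opinions between the voters of `V` and proposal `p`. -/
def matchCount {n t : ℕ} (V : Fin n → Fin t → Bool) (p : Fin t → Bool) : ℕ :=
  (univ.filter (fun ij : Fin n × Fin t => V ij.1 ij.2 = p ij.2)).card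

/-- The number `s_{k,l}` of k-proposals supported by a (fixed, canonical) l-voter. -/
def skl (t k l : ℕ) : ℕ :=
  ((univ : Finset (Fin t → Bool)).filter
    (fun p => trueCount p = k ∧ Supports (fun j : Fin t => decide (j.val < l)) p)).card

lemma agreeCount_comm {t : ℕ} (v p : Fin t → Bool) : agreeCount v p = agreeCount p v := by
  unfold agreeCount
  congr 1
  exact Finset.filter_congr fun j _ => eq_comm

lemma supports_comm {t : ℕ} (v p : Fin t → Bool) : Supports v p ↔ Supports p v := by
  unfold Supports
  rw [agreeCount_comm]

lemma trueCount_comp_perm {t : ℕ} (p : Fin t → Bool) (σ : Equiv.Perm (Fin t)) :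
    trueCount (p ∘ σ) = trueCount p := by
  unfold trueCount
  exact Finset.card_equiv σ (by simp)

lemma agreeCount_comp_perm {t : ℕ} (v p : Fin t → Bool) (σ : Equiv.Perm (Fin t)) :
    agreeCount (v ∘ σ) (p ∘ σ) = agreeCount v p := by
  unfold agreeCount
  exact Finset.card_equiv σ (by simp)

lemma trueCount_le {t : ℕ} (p : Fin t → Bool) : trueCount p ≤ t := by
  have := Finset.card_filter_le (univ : Finset (Fin t)) (fun j => p j = true)
  simpa [trueCount] using this

lemma trueCount_canonical {t k : ℕ} (hk : k ≤ t) :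
    trueCount (fun j : Fin t => decide (j.val < k)) = k := by
  unfold trueCount
  simp only [decide_eq_true_eq]
  rw [show (univ.filter fun j : Fin t => j.val < k)
      = (Finset.range k).attachFin
        (fun m hm => lt_of_lt_of_le (Finset.mem_range.mp hm) hk) from by
    ext j; simp [Finset.mem_attachFin]]
  rw [Finset.card_attachFin, Finset.card_range]

lemma exists_perm_eq {t : ℕ} (p p' : Fin t → Bool) (h : trueCount p = trueCount p') :
    ∃ σ : Equiv.Perm (Fin t), p = p' ∘ σ := by
  classical
  have h1 : Fintype.card {j // p j = true} = Fintype.card {j // p' j = true} := by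
    simpa [Fintype.card_subtype, trueCount] using h
  let e := Fintype.equivOfCardEq h1
  refine ⟨e.extendSubtype, ?_⟩
  funext j
  by_cases hj : p j = true
  · rw [Function.comp_apply, hj, e.extendSubtype_mem j hj]
  · have h2 := e.extendSubtype_not_mem j hj
    simp only [Bool.not_eq_true] at hj h2
    rw [Function.comp_apply, hj, h2]

lemma card_supports {t k l : ℕ} (p : Fin t → Bool) (hp : trueCount p = k) (hk : k ≤ t) :
    ((univ : Finset (Fin t → Bool)).filter
      (fun v => trueCount v = l ∧ Supports v p)).card = skl t l k := by
  classical
  obtain ⟨σ, hσ⟩ := exists_perm_eq (fun j : Fin t => decide (j.val < k)) p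
    (by rw [trueCount_canonical hk, hp])
  unfold skl
  apply Finset.card_equiv (Equiv.arrowCongr σ.symm (Equiv.refl Bool))
  intro v
  simp only [mem_filter, mem_univ, true_and]
  have hv : (Equiv.arrowCongr σ.symm (Equiv.refl Bool)) v = v ∘ σ := by
    funext j; simp [Equiv.arrowCongr]
  rw [hv]
  rw [trueCount_comp_perm, hσ]
  constructor
  · rintro ⟨h1, h2⟩
    refine ⟨h1, ?_⟩
    rw [supports_comm]
    unfold Supports at h2 ⊢
    rwa [agreeCount_comp_perm]
  · rintro ⟨h1, h2⟩
    refine ⟨h1, ?_⟩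
    rw [supports_comm] at h2
    unfold Supports at h2 ⊢
    rwa [agreeCount_comp_perm] at h2

lemma card_trueCount_eq {t k : ℕ} :
    ((univ : Finset (Fin t → Bool)).filter (fun p => trueCount p = k)).card = t.choose k := by
  classical
  have : ((univ : Finset (Fin t)).powersetCard k).card = t.choose k := by
    simp [Finset.card_powersetCard]
  rw [← this]
  apply Finset.card_bij (fun p _ => univ.filter (fun j => p j = true))
  · intro p hp
    simp only [mem_filter, mem_univ, true_and] at hp
    simp [Finset.mem_powersetCard]
    exact hp
  · intro p hp p' hp' h
    funext j
    have : (j ∈ univ.filter (fun j => p j = true)) ↔ (j ∈ univ.filter (fun j => p' j = true)) := by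
      rw [h]
    simp only [mem_filter, mem_univ, true_and] at this
    cases hpj : p j <;> cases hpj' : p' j <;> simp_all
  · intro s hs
    simp only [Finset.mem_powersetCard] at hs
    refine ⟨fun j => decide (j ∈ s), ?_, ?_⟩
    · simp only [mem_filter, mem_univ, true_and, trueCount]
      refine Finset.mem_filter.mpr ⟨Finset.mem_univ _, ?_⟩
      convert hs.2 using 2
      ext j; simp
    · ext j; simp

lemma skl_symm {t k l : ℕ} (hk : k ≤ t) (hl : l ≤ t) :
    t.choose k * skl t l k = t.choose l * skl t k l := by
  classical
  have key : ∀ (a b : ℕ), a ≤ t → b ≤ t →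
      (∑ p ∈ (univ : Finset (Fin t → Bool)).filter (fun p => trueCount p = a),
        ((univ : Finset (Fin t → Bool)).filter
          (fun v => trueCount v = b ∧ Supports v p)).card) = t.choose a * skl t b a := by
    intro a b ha hb
    rw [Finset.sum_congr rfl (fun p hp => by
      simp only [mem_filter, mem_univ, true_and] at hp
      exact card_supports p hp ha)]
    rw [Finset.sum_const, card_trueCount_eq, smul_eq_mul]
  have expand : ∀ a b : ℕ,
      (∑ p ∈ (univ : Finset (Fin t → Bool)).filter (fun p => trueCount p = a),
        ((univ : Finset (Fin t → Bool)).filter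
          (fun v => trueCount v = b ∧ Supports v p)).card)
      = ∑ p : Fin t → Bool, ∑ v : Fin t → Bool,
          (if trueCount v = b ∧ trueCount p = a ∧ Supports v p then 1 else 0) := by
    intro a b
    rw [Finset.sum_filter]
    apply Finset.sum_congr rfl
    intro p _
    by_cases h : trueCount p = a
    · rw [if_pos h, Finset.card_filter]
      apply Finset.sum_congr rfl
      intro v _
      by_cases h2 : trueCount v = b ∧ Supports v p
      · rw [if_pos h2, if_pos ⟨h2.1, h, h2.2⟩]
      · rw [if_neg h2, if_neg (by tauto)]
    · rw [if_neg h, eq_comm, Finset.sum_eq_zero]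
      intro v _
      rw [if_neg (by tauto)]
  have swap : (∑ p ∈ (univ : Finset (Fin t → Bool)).filter (fun p => trueCount p = k),
        ((univ : Finset (Fin t → Bool)).filter
          (fun v => trueCount v = l ∧ Supports v p)).card)
      = (∑ p ∈ (univ : Finset (Fin t → Bool)).filter (fun p => trueCount p = l),
        ((univ : Finset (Fin t → Bool)).filter
          (fun v => trueCount v = k ∧ Supports v p)).card) := by
    rw [expand k l, expand l k, Finset.sum_comm]
    apply Finset.sum_congr rfl
    intro v _
    apply Finset.sum_congr rfl
    intro p _
    by_cases h1 : trueCount p = k <;> by_cases h2 : trueCount v = l <;>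
      by_cases h3 : Supports v p <;>
      simp_all [supports_comm p v]
  rw [← key k l hk hl, swap, key l k hl hk]

/-- a rational feasible point of the LP yields a voter matrix with the
prescribed fractions of l-voters in which no proposal with at least w true entries is
majority supported. -/
theorem lp_solution_realizable (t w : ℕ) (ht : 1 ≤ t)
    (hw1 : (t + 2) / 2 ≤ w) (hw2 : w ≤ t)
    (q : ℕ → ℚ) (hq0 : ∀ l, 0 ≤ q l) (hq1 : ∑ l ∈ Finset.range (t + 1), q l = 1)
    (hlp : ∀ k, w ≤ k → k ≤ t →
      ∑ l ∈ Finset.range (t + 1), (skl t k l : ℚ) * q l < (Nat.choose t k : ℚ) / 2) :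
    ∃ n : ℕ, 1 ≤ n ∧ ∃ V : Fin n → Fin t → Bool,
      (∀ l, l ≤ t →
        (((univ : Finset (Fin n)).filter (fun i => trueCount (V i) = l)).card : ℚ)
          = q l * n) ∧
      ∀ p : Fin t → Bool, w ≤ trueCount p → ¬ MajSupported V p := by
  classical
  set d : ℕ := ∏ l ∈ Finset.range (t + 1), (q l).den with hd
  set P : ℕ := ∏ l ∈ Finset.range (t + 1), Nat.choose t l with hP
  have hd_pos : 0 < d := Finset.prod_pos (fun l _ => (q l).den_pos)
  have hP_pos : 0 < P := Finset.prod_pos (fun l hl =>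
    Nat.choose_pos (Nat.lt_succ_iff.mp (Finset.mem_range.mp hl)))
  set n := d * P with hn
  have hn_pos : 0 < n := Nat.mul_pos hd_pos hP_pos
  have hden : ∀ l ∈ Finset.range (t+1), (q l).den ∣ d :=
    fun l hl => Finset.dvd_prod_of_mem _ hl
  have hchoose : ∀ l ∈ Finset.range (t+1), Nat.choose t l ∣ P :=
    fun l hl => Finset.dvd_prod_of_mem _ hl
  set a : ℕ → ℕ := fun l => (q l).num.toNat * (d / (q l).den) with ha
  have haq : ∀ l ∈ Finset.range (t+1), ((a l : ℚ)) = q l * d := by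
    intro l hl
    have hnum : (((q l).num.toNat : ℤ) : ℚ) = ((q l).num : ℚ) := by
      rw [Int.toNat_of_nonneg (Rat.num_nonneg.mpr (hq0 l))]
    have hden0 : ((q l).den : ℚ) ≠ 0 := Nat.cast_ne_zero.mpr (q l).den_nz
    have hmul : q l * ((q l).den : ℚ) = ((q l).num : ℚ) := Rat.mul_den_eq_num _
    have hdq : (d : ℚ) = ((q l).den : ℚ) * ((d / (q l).den : ℕ) : ℚ) := by
      rw [← Nat.cast_mul, Nat.mul_div_cancel' (hden l hl)]
    calc ((a l : ℕ) : ℚ) = ((q l).num : ℚ) * ((d / (q l).den : ℕ) : ℚ) := by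
          rw [ha]; push_cast [← hnum]; ring
      _ = (q l * ((q l).den : ℚ)) * ((d / (q l).den : ℕ) : ℚ) := by rw [hmul]
      _ = q l * d := by rw [hdq]; ring
  set c : ℕ → ℕ := fun l => a l * (P / Nat.choose t l) with hcdef
  have hc : ∀ l ∈ Finset.range (t+1), ((c l * Nat.choose t l : ℕ) : ℚ) = q l * n := by
    intro l hl
    have : c l * Nat.choose t l = a l * P := by
      rw [hcdef]
      rw [mul_assoc, Nat.div_mul_cancel (hchoose l hl)]
    rw [this]
    push_cast
    rw [haq l hl, hn]
    push_cast
    ring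
  -- sum of multiplicities over a fiber
  have fiber_sum : ∀ (s : Finset (Fin t → Bool)) (l : ℕ),
      (∑ v ∈ s.filter (fun v => trueCount v = l), c (trueCount v))
        = (s.filter (fun v => trueCount v = l)).card * c l := by
    intro s l
    rw [Finset.sum_congr rfl (fun v hv => by
      rw [(Finset.mem_filter.mp hv).2])]
    rw [Finset.sum_const, smul_eq_mul]
  have total_sum : ∀ (s : Finset (Fin t → Bool)),
      (∑ v ∈ s, c (trueCount v))
        = ∑ l ∈ Finset.range (t+1), (s.filter (fun v => trueCount v = l)).card * c l := by
    intro s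
    rw [← Finset.sum_fiberwise_of_maps_to
      (fun v _ => Finset.mem_range.mpr (Nat.lt_succ_of_le (trueCount_le v)))
      (fun v => c (trueCount v))]
    exact Finset.sum_congr rfl (fun l _ => fiber_sum s l)
  have card_I : Fintype.card (Σ v : Fin t → Bool, Fin (c (trueCount v))) = n := by
    have h1 : Fintype.card (Σ v : Fin t → Bool, Fin (c (trueCount v)))
        = ∑ v : Fin t → Bool, c (trueCount v) := by
      rw [Fintype.card_sigma]
      simp
    have h2 : ((Fintype.card (Σ v : Fin t → Bool, Fin (c (trueCount v))) : ℕ) : ℚ) = (n : ℚ) := by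
      rw [h1, total_sum]
      push_cast
      have step : ∀ l ∈ Finset.range (t+1),
          ((((univ : Finset (Fin t → Bool)).filter
            (fun v => trueCount v = l)).card : ℚ)) * (c l : ℚ) = q l * n := by
        intro l hl
        rw [card_trueCount_eq]
        have h3 := hc l hl
        push_cast at h3
        linarith
      rw [Finset.sum_congr rfl step, ← Finset.sum_mul, hq1, one_mul]
    exact_mod_cast h2
  set e : (Σ v : Fin t → Bool, Fin (c (trueCount v))) ≃ Fin n :=
    Fintype.equivFinOfCardEq card_I with he
  set V : Fin n → Fin t → Bool := fun i => (e.symm i).1 with hV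
  -- master counting identity
  have count : ∀ (Q : (Fin t → Bool) → Prop) (inst : DecidablePred Q),
      ((univ : Finset (Fin n)).filter (fun i => Q (V i))).card
        = ∑ v ∈ (univ : Finset (Fin t → Bool)).filter Q, c (trueCount v) := by
    intro Q inst
    have step1 : ((univ : Finset (Fin n)).filter (fun i => Q (V i))).card
        = ((univ : Finset (Σ v : Fin t → Bool, Fin (c (trueCount v)))).filter
            (fun x => Q x.1)).card := by
      apply Finset.card_equiv e.symm
      intro i
      simp [hV]
    rw [step1]
    have step2 : ((univ : Finset (Σ v : Fin t → Bool, Fin (c (trueCount v)))).filter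
            (fun x => Q x.1))
        = ((univ : Finset (Fin t → Bool)).filter Q).sigma
            (fun v => (univ : Finset (Fin (c (trueCount v))))) := by
      ext ⟨v, i⟩
      simp [Finset.mem_sigma]
    rw [step2, Finset.card_sigma]
    simp
  refine ⟨n, hn_pos, V, ?_, ?_⟩
  · -- the counts
    intro l hl
    have hlr : l ∈ Finset.range (t+1) := Finset.mem_range.mpr (Nat.lt_succ_of_le hl)
    rw [count (fun v => trueCount v = l) inferInstance]
    rw [fiber_sum, card_trueCount_eq]
    rw [show ((Nat.choose t l * c l : ℕ) : ℚ) = ((c l * Nat.choose t l : ℕ) : ℚ) by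
      push_cast; ring]
    exact hc l hlr
  · -- no majority support
    intro p hwp hmaj
    set k := trueCount p with hk
    have hkt : k ≤ t := trueCount_le p
    have hkr : ∀ l ∈ Finset.range (t+1),
        (((univ : Finset (Fin t → Bool)).filter (fun v => Supports v p)).filter
          (fun v => trueCount v = l)).card = skl t l k := by
      intro l _
      rw [Finset.filter_filter]
      rw [Finset.filter_congr (fun v (_ : v ∈ (univ : Finset (Fin t → Bool))) =>
        (and_comm : Supports v p ∧ trueCount v = l ↔ trueCount v = l ∧ Supports v p))]
      exact card_supports p rfl hkt
    have hsup : ((univ : Finset (Fin n)).filter (fun i => Supports (V i) p)).card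
        = ∑ l ∈ Finset.range (t+1), skl t l k * c l := by
      rw [count (fun v => Supports v p) inferInstance, total_sum]
      exact Finset.sum_congr rfl (fun l hl => by rw [hkr l hl])
    -- the inequality in ℚ
    have hC_pos : (0 : ℚ) < (Nat.choose t k : ℚ) :=
      Nat.cast_pos.mpr (Nat.choose_pos hkt)
    have hkey : ((∑ l ∈ Finset.range (t+1), skl t l k * c l : ℕ) : ℚ) * (Nat.choose t k : ℚ)
        = (n : ℚ) * ∑ l ∈ Finset.range (t + 1), (skl t k l : ℚ) * q l := by
      push_cast
      rw [Finset.sum_mul, Finset.mul_sum]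
      apply Finset.sum_congr rfl
      intro l hl
      have hsym : (Nat.choose t k : ℚ) * (skl t l k : ℚ) = (Nat.choose t l : ℚ) * (skl t k l : ℚ) := by
        exact_mod_cast congrArg (Nat.cast : ℕ → ℚ)
          (skl_symm hkt (Nat.lt_succ_iff.mp (Finset.mem_range.mp hl)))
      have hcl : (c l : ℚ) * (Nat.choose t l : ℚ) = q l * n := by
        have := hc l hl; push_cast at this; linarith
      calc (skl t l k : ℚ) * (c l : ℚ) * (Nat.choose t k : ℚ)
          = ((Nat.choose t k : ℚ) * (skl t l k : ℚ)) * (c l) := by ring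
        _ = ((Nat.choose t l : ℚ) * (skl t k l : ℚ)) * (c l) := by rw [hsym]
        _ = (skl t k l : ℚ) * ((c l : ℚ) * (Nat.choose t l : ℚ)) := by ring
        _ = (skl t k l : ℚ) * (q l * n) := by rw [hcl]
        _ = (n : ℚ) * ((skl t k l : ℚ) * q l) := by ring
    have hlt := hlp k hwp hkt
    have hnq : (0 : ℚ) < (n : ℚ) := Nat.cast_pos.mpr hn_pos
    have hmain : ((∑ l ∈ Finset.range (t+1), skl t l k * c l : ℕ) : ℚ) * (Nat.choose t k : ℚ)
        < (n : ℚ) * ((Nat.choose t k : ℚ) / 2) := by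
      rw [hkey]
      exact mul_lt_mul_of_pos_left hlt hnq
    have hfin : (2 : ℚ) * ((∑ l ∈ Finset.range (t+1), skl t l k * c l : ℕ) : ℚ) < (n : ℚ) := by
      nlinarith [hC_pos]
    have : 2 * (∑ l ∈ Finset.range (t+1), skl t l k * c l) < n := by exact_mod_cast hfin
    unfold MajSupported at hmaj
    rw [hsup] at hmaj
    omega
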